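/- For every real number n ≥ 3 and every real number ε > 0, Σ_{k} n^{1+1/k} ≤ (3ε+1)·n^{1+1/ε}, where the sum ranges over all integers k with ε ≤ k ≤ 2·ln n. -/

import Mathlib

/-- For every real `n ≥ 3` and every real `ε > 0`,
`Σ_k n^(1+1/k) ≤ (3ε+1)·n^(1+1/ε)`, the sum being over all (positive) integers `k`
with `ε ≤ k ≤ 2·ln n`. -/
theorem sum_rpow_harmonic_exponent_le (n ε : ℝ) (hn : 3 ≤ n) (hε : 0 < ε) :
    ∑ k ∈ Finset.Icc ⌈ε⌉₊ ⌊2 * Real.log n⌋₊, n ^ (1 + 1 / (k : ℝ)) ≤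
      (3 * ε + 1) * n ^ (1 + 1 / ε) := by
  have hn0 : (0:ℝ) < n := by linarith
  have hn1 : (1:ℝ) < n := by linarith
  have hB0 : (0:ℝ) ≤ n ^ (1 + 1 / ε) := le_of_lt (Real.rpow_pos_of_pos hn0 _)
  set a := ⌈ε⌉₊ with ha_def
  set M := ⌊2 * Real.log n⌋₊ with hM_def
  set b := ⌊2 * ε⌋₊ with hb_def
  have ha : ε ≤ (a:ℝ) := Nat.le_ceil ε
  have ha1 : 1 ≤ a := Nat.ceil_pos.mpr hε
  have hb : (b:ℝ) ≤ 2 * ε := Nat.floor_le (by linarith)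
  have hlogpos : 0 < Real.log n := Real.log_pos hn1
  have hM : (M:ℝ) ≤ 2 * Real.log n := Nat.floor_le (by linarith)
  -- each term with ε ≤ k is ≤ n^(1+1/ε)
  have hterm1 : ∀ k ∈ (Finset.Icc a M).filter (fun k => k ≤ b),
      n ^ (1 + 1 / (k:ℝ)) ≤ n ^ (1 + 1 / ε) := by
    intro k hk
    simp only [Finset.mem_filter, Finset.mem_Icc] at hk
    have hk1 : 1 ≤ k := le_trans ha1 hk.1.1
    have hkε : ε ≤ (k:ℝ) := le_trans ha (by exact_mod_cast hk.1.1)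
    refine Real.rpow_le_rpow_of_exponent_le (le_of_lt hn1) ?_
    have : 1 / (k:ℝ) ≤ 1 / ε := one_div_le_one_div_of_le hε hkε
    linarith
  -- each term with 2ε < k is ≤ n^(1+1/(2ε))
  have hterm2 : ∀ k ∈ (Finset.Icc a M).filter (fun k => ¬ k ≤ b),
      n ^ (1 + 1 / (k:ℝ)) ≤ n ^ (1 + 1 / (2*ε)) := by
    intro k hk
    simp only [Finset.mem_filter, Finset.mem_Icc, not_le] at hk
    have hk2ε : 2 * ε < (k:ℝ) := by
      have := (Nat.floor_lt (by linarith : (0:ℝ) ≤ 2*ε)).mp hk.2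
      exact this
    refine Real.rpow_le_rpow_of_exponent_le (le_of_lt hn1) ?_
    have : 1 / (k:ℝ) ≤ 1 / (2*ε) := one_div_le_one_div_of_le (by linarith) (le_of_lt hk2ε)
    linarith
  have hsum1 : ∑ k ∈ (Finset.Icc a M).filter (fun k => k ≤ b), n ^ (1 + 1 / (k:ℝ))
      ≤ (ε + 1) * n ^ (1 + 1 / ε) := by
    have hcard : (((Finset.Icc a M).filter (fun k => k ≤ b)).card : ℝ) ≤ ε + 1 := by
      have hsub : (Finset.Icc a M).filter (fun k => k ≤ b) ⊆ Finset.Icc a b := by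
        intro k hk
        simp only [Finset.mem_filter, Finset.mem_Icc] at hk ⊢
        exact ⟨hk.1.1, hk.2⟩
      have hle : ((Finset.Icc a M).filter (fun k => k ≤ b)).card ≤ (Finset.Icc a b).card :=
        Finset.card_le_card hsub
      have hIcc : (Finset.Icc a b).card = b + 1 - a := Nat.card_Icc a b
      rcases le_or_gt a (b+1) with h | h
      · have : ((b + 1 - a : ℕ) : ℝ) = (b:ℝ) + 1 - a := by
          push_cast [Nat.cast_sub h]; ring
        have h2 : ((Finset.Icc a b).card : ℝ) ≤ ε + 1 := by
          rw [hIcc, this]; linarith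
        calc (((Finset.Icc a M).filter (fun k => k ≤ b)).card : ℝ)
            ≤ ((Finset.Icc a b).card : ℝ) := by exact_mod_cast hle
          _ ≤ ε + 1 := h2
      · have : (Finset.Icc a b).card = 0 := by
          rw [hIcc]; omega
        have h0 : ((Finset.Icc a M).filter (fun k => k ≤ b)).card = 0 := by omega
        rw [h0]; push_cast; linarith
    calc ∑ k ∈ (Finset.Icc a M).filter (fun k => k ≤ b), n ^ (1 + 1 / (k:ℝ))
        ≤ ((Finset.Icc a M).filter (fun k => k ≤ b)).card • n ^ (1 + 1 / ε) :=
          Finset.sum_le_card_nsmul _ _ _ hterm1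
      _ = (((Finset.Icc a M).filter (fun k => k ≤ b)).card : ℝ) * n ^ (1 + 1 / ε) := by
          rw [nsmul_eq_mul]
      _ ≤ (ε + 1) * n ^ (1 + 1 / ε) := mul_le_mul_of_nonneg_right hcard hB0
  -- key: log n ≤ ε * n^(1/(2ε))
  have hkey : Real.log n ≤ ε * n ^ (1 / (2*ε)) := by
    have hx0 : 0 ≤ Real.log n / (2*ε) := by positivity
    set x := Real.log n / (2*ε) with hx_def
    have hrw : n ^ (1 / (2*ε)) = Real.exp x := by
      rw [Real.rpow_def_of_pos hn0]
      congr 1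
      field_simp [hx_def]
      rw [hx_def]; field_simp
    have hexp : 2 * x ≤ Real.exp x := by
      have h1 : x/2 + 1 ≤ Real.exp (x/2) := Real.add_one_le_exp _
      have h2 : Real.exp x = Real.exp (x/2) * Real.exp (x/2) := by
        rw [← Real.exp_add]; ring_nf
      have h3 : (x/2+1)*(x/2+1) ≤ Real.exp (x/2) * Real.exp (x/2) :=
        mul_le_mul h1 h1 (by linarith) (Real.exp_pos _).le
      nlinarith [sq_nonneg (x/2 - 1)]
    have : Real.log n = 2 * ε * x := by
      rw [hx_def]; field_simp
    rw [this, hrw]; nlinarith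
  have hsum2 : ∑ k ∈ (Finset.Icc a M).filter (fun k => ¬ k ≤ b), n ^ (1 + 1 / (k:ℝ))
      ≤ 2 * ε * n ^ (1 + 1 / ε) := by
    have hcard : (((Finset.Icc a M).filter (fun k => ¬ k ≤ b)).card : ℝ) ≤ 2 * Real.log n := by
      have hle : ((Finset.Icc a M).filter (fun k => ¬ k ≤ b)).card ≤ (Finset.Icc a M).card :=
        Finset.card_filter_le _ _
      have hIcc : (Finset.Icc a M).card = M + 1 - a := Nat.card_Icc a M
      have : (Finset.Icc a M).card ≤ M := by omega
      have hM' : (((Finset.Icc a M).filter (fun k => ¬ k ≤ b)).card : ℝ) ≤ (M:ℝ) := by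
        exact_mod_cast le_trans hle this
      linarith
    have hB0' : (0:ℝ) ≤ n ^ (1 + 1 / (2*ε)) := le_of_lt (Real.rpow_pos_of_pos hn0 _)
    have hmul : n ^ (1 / (2*ε)) * n ^ (1 + 1 / (2*ε)) = n ^ (1 + 1 / ε) := by
      rw [← Real.rpow_add hn0]
      congr 1
      field_simp
      ring
    calc ∑ k ∈ (Finset.Icc a M).filter (fun k => ¬ k ≤ b), n ^ (1 + 1 / (k:ℝ))
        ≤ ((Finset.Icc a M).filter (fun k => ¬ k ≤ b)).card • n ^ (1 + 1 / (2*ε)) :=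
          Finset.sum_le_card_nsmul _ _ _ hterm2
      _ = (((Finset.Icc a M).filter (fun k => ¬ k ≤ b)).card : ℝ) * n ^ (1 + 1 / (2*ε)) := by
          rw [nsmul_eq_mul]
      _ ≤ 2 * Real.log n * n ^ (1 + 1 / (2*ε)) := mul_le_mul_of_nonneg_right hcard hB0'
      _ ≤ 2 * (ε * n ^ (1 / (2*ε))) * n ^ (1 + 1 / (2*ε)) := by
          apply mul_le_mul_of_nonneg_right _ hB0'
          linarith
      _ = 2 * ε * (n ^ (1 / (2*ε)) * n ^ (1 + 1 / (2*ε))) := by ring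
      _ = 2 * ε * n ^ (1 + 1 / ε) := by rw [hmul]
  calc ∑ k ∈ Finset.Icc a M, n ^ (1 + 1 / (k:ℝ))
      = (∑ k ∈ (Finset.Icc a M).filter (fun k => k ≤ b), n ^ (1 + 1 / (k:ℝ)))
        + ∑ k ∈ (Finset.Icc a M).filter (fun k => ¬ k ≤ b), n ^ (1 + 1 / (k:ℝ)) :=
        (Finset.sum_filter_add_sum_filter_not _ _ _).symm
    _ ≤ (ε + 1) * n ^ (1 + 1 / ε) + 2 * ε * n ^ (1 + 1 / ε) := add_le_add hsum1 hsum2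
    _ = (3 * ε + 1) * n ^ (1 + 1 / ε) := by ring
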